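/- If G and G' are commuting invertible complex r×r matrices, then their normalised logarithms norm log G and norm log G' commute. -/

import Mathlib

open Complex Matrix

open Polynomial


noncomputable def Epoly (m : ℕ) : ℂ[X] :=
  ∑ j ∈ Finset.range m, C ((j.factorial : ℂ)⁻¹) * X ^ j

noncomputable def Lpoly (m : ℕ) : ℂ[X] :=
  ∑ k ∈ Finset.range m, C ((-1 : ℂ) ^ (k + 1) / k) * X ^ k

lemma derivative_Epoly (m : ℕ) : derivative (Epoly (m + 1)) = Epoly m := by
  unfold Epoly
  rw [derivative_sum, Finset.sum_range_succ']
  simp only [derivative_C_mul, derivative_X_pow]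
  simp only [Nat.cast_zero, map_zero, zero_mul, mul_zero, add_zero]
  refine Finset.sum_congr rfl fun j _ => ?_
  rw [Nat.add_sub_cancel]
  rw [← mul_assoc, ← C_mul]
  congr 2
  rw [Nat.factorial_succ]
  push_cast
  have h1 : ((j.factorial : ℂ)) ≠ 0 := Nat.cast_ne_zero.2 j.factorial_ne_zero
  have h2 : ((j : ℂ) + 1) ≠ 0 := by
    have : (0:ℝ) < (j:ℝ) + 1 := by positivity
    intro h
    have := congrArg Complex.re h
    simp at this; linarith
  field_simp

lemma derivative_Lpoly (m : ℕ) :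
    derivative (Lpoly (m + 1)) = ∑ k ∈ Finset.range m, (-X : ℂ[X]) ^ k := by
  unfold Lpoly
  rw [derivative_sum, Finset.sum_range_succ']
  simp only [derivative_C_mul, derivative_X_pow]
  simp only [Nat.cast_zero, map_zero, zero_mul, mul_zero, add_zero]
  refine Finset.sum_congr rfl fun k _ => ?_
  rw [Nat.add_sub_cancel]
  rw [← mul_assoc, ← C_mul]
  have h2 : ((k : ℂ) + 1) ≠ 0 := by
    have : (0:ℝ) < (k:ℝ) + 1 := by positivity
    intro h
    have := congrArg Complex.re h
    simp at this; linarith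
  have h3 : ((-1:ℂ) ^ (k + 1 + 1) / (↑(k + 1)) * (↑(k + 1))) = (-1)^k := by
    push_cast
    rw [pow_succ, pow_succ]
    field_simp
  rw [h3, _root_.map_pow, _root_.map_neg, _root_.map_one, neg_pow (X : ℂ[X]) k, ← mul_pow]

lemma eval_zero_Epoly (m : ℕ) : (Epoly (m + 1)).eval 0 = 1 := by
  unfold Epoly
  rw [eval_finset_sum, Finset.sum_range_succ']
  simp

lemma eval_zero_Lpoly (m : ℕ) : (Lpoly m).eval 0 = 0 := by
  unfold Lpoly
  rw [eval_finset_sum]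
  cases m with
  | zero => simp
  | succ m => rw [Finset.sum_range_succ']; simp

lemma key_dvd (m : ℕ) :
    (X : ℂ[X]) ^ (m + 1) ∣ (Lpoly (m + 1)).comp (Epoly (m + 1) - 1) - X := by
  set E : ℂ[X] := Epoly (m + 1) - 1 with hE
  set S : ℂ[X] := ∑ k ∈ Finset.range m, (-E) ^ k with hS
  have hXE : (X : ℂ[X]) ∣ E := by
    rw [Polynomial.X_dvd_iff, hE, Polynomial.coeff_sub, coeff_zero_eq_eval_zero,
      eval_zero_Epoly]
    simp
  have hder : derivative ((Lpoly (m + 1)).comp E) = Epoly m * S := by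
    rw [derivative_comp, derivative_Lpoly]
    congr 1
    · rw [hE, derivative_sub, derivative_Epoly, derivative_one, sub_zero]
    · rw [hS]
      simp only [Polynomial.comp, Polynomial.eval₂_finset_sum, Polynomial.eval₂_pow,
        Polynomial.eval₂_neg, Polynomial.eval₂_X]
  have hEm : Epoly m = 1 + E - C ((m.factorial : ℂ)⁻¹) * X ^ m := by
    have h := Finset.sum_range_succ (fun j => C ((j.factorial : ℂ)⁻¹) * X ^ j) m
    rw [hE]
    unfold Epoly
    rw [h]
    ring
  have hgeom : S * (1 + E) = 1 - (-E) ^ m := by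
    have h := geom_sum_mul (-E) m
    rw [hS]
    linear_combination -h
  have hdvd1 : (X : ℂ[X]) ^ m ∣ derivative ((Lpoly (m + 1)).comp E) - 1 := by
    have heq : derivative ((Lpoly (m + 1)).comp E) - 1
        = -((-E) ^ m) - C ((m.factorial : ℂ)⁻¹) * X ^ m * S := by
      rw [hder, hEm]
      linear_combination hgeom
    rw [heq]
    have h1 : (X : ℂ[X]) ^ m ∣ (-E) ^ m := by
      have : (X : ℂ[X]) ∣ -E := (dvd_neg).2 hXE
      exact pow_dvd_pow_of_dvd this m
    exact dvd_sub (dvd_neg.2 h1) (Dvd.intro_left _ rfl |>.mul_right S |> fun h => h)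
  rw [Polynomial.X_pow_dvd_iff]
  intro d hd
  match d, hd with
  | 0, _ =>
    rw [Polynomial.coeff_sub, coeff_zero_eq_eval_zero, Polynomial.eval_comp]
    have h0 : E.eval 0 = 0 := by rw [hE]; simp [eval_zero_Epoly]
    rw [h0, eval_zero_Lpoly]
    simp
  | (n+1), hd =>
    have hn : n < m := by omega
    have h4 : (derivative ((Lpoly (m + 1)).comp E) - 1).coeff n = 0 :=
      Polynomial.X_pow_dvd_iff.mp hdvd1 n hn
    have h3 := Polynomial.coeff_derivative ((Lpoly (m + 1)).comp E - X) n
    rw [derivative_sub, derivative_X] at h3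
    rw [h4] at h3
    have hne : ((n : ℂ) + 1) ≠ 0 := by
      have h5 : ((n + 1 : ℕ) : ℂ) ≠ 0 := Nat.cast_ne_zero.mpr (Nat.succ_ne_zero n)
      push_cast at h5
      exact h5
    rcases mul_eq_zero.mp h3.symm with h | h
    · exact h
    · exact absurd h hne

open NormedSpace Matrix

attribute [local instance] Matrix.linftyOpSemiNormedRing Matrix.linftyOpNormedRing
  Matrix.linftyOpNormedAlgebra

variable {r : ℕ}

lemma commute_aeval {A S : Matrix (Fin r) (Fin r) ℂ} (h : Commute A S) (q : ℂ[X]) :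
    Commute A (aeval S q) := by
  induction q using Polynomial.induction_on' with
  | add p q hp hq => rw [_root_.map_add]; exact hp.add_right hq
  | monomial n a =>
    rw [aeval_monomial]
    exact (Algebra.commute_algebraMap_right a A).mul_right (h.pow_right n)

lemma exp_mulVec {T : Matrix (Fin r) (Fin r) ℂ} {m : ℕ} {y : Fin r → ℂ}
    (hy : T ^ m *ᵥ y = 0) :
    NormedSpace.exp T *ᵥ y = aeval T (Epoly m) *ᵥ y := by
  classical
  let L0 : Matrix (Fin r) (Fin r) ℂ →ₗ[ℂ] (Fin r → ℂ) :=
    { toFun := fun M => M *ᵥ y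
      map_add' := fun M N => Matrix.add_mulVec M N y
      map_smul' := fun a M => Matrix.smul_mulVec a M y }
  let L : Matrix (Fin r) (Fin r) ℂ →L[ℂ] (Fin r → ℂ) :=
    ⟨L0, L0.continuous_of_finiteDimensional⟩
  have hsummable : Summable (fun n : ℕ => ((n.factorial : ℂ))⁻¹ • T ^ n) :=
    NormedSpace.expSeries_summable' T
  have h2 : NormedSpace.exp T *ᵥ y = ∑' n : ℕ, ((n.factorial : ℂ))⁻¹ • (T ^ n *ᵥ y) := by
    have h := L.map_tsum hsummable
    have hL : ∀ M : Matrix (Fin r) (Fin r) ℂ, L M = M *ᵥ y := fun M => rfl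
    rw [NormedSpace.exp_eq_tsum ℂ]
    calc (∑' n : ℕ, ((n.factorial : ℂ))⁻¹ • T ^ n) *ᵥ y
        = L (∑' n : ℕ, ((n.factorial : ℂ))⁻¹ • T ^ n) := rfl
      _ = ∑' n : ℕ, L (((n.factorial : ℂ))⁻¹ • T ^ n) := h
      _ = ∑' n : ℕ, ((n.factorial : ℂ))⁻¹ • (T ^ n *ᵥ y) := by
          refine tsum_congr fun n => ?_
          rw [_root_.map_smul, hL]
  have h3 : ∑' n : ℕ, ((n.factorial : ℂ))⁻¹ • (T ^ n *ᵥ y)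
      = ∑ n ∈ Finset.range m, ((n.factorial : ℂ))⁻¹ • (T ^ n *ᵥ y) := by
    refine tsum_eq_sum ?_
    intro n hn
    have hnm : m ≤ n := by simpa using hn
    have hzero : T ^ n *ᵥ y = 0 := by
      rw [show n = (n - m) + m by omega, pow_add, ← Matrix.mulVec_mulVec, hy,
        Matrix.mulVec_zero]
    rw [hzero, smul_zero]
  have h4 : aeval T (Epoly m) *ᵥ y
      = ∑ n ∈ Finset.range m, ((n.factorial : ℂ))⁻¹ • (T ^ n *ᵥ y) := by
    unfold Epoly
    rw [_root_.map_sum]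
    calc (∑ n ∈ Finset.range m, aeval T (C ((n.factorial : ℂ))⁻¹ * X ^ n)) *ᵥ y
        = L0 (∑ n ∈ Finset.range m, aeval T (C ((n.factorial : ℂ))⁻¹ * X ^ n)) := rfl
      _ = ∑ n ∈ Finset.range m, L0 (aeval T (C ((n.factorial : ℂ))⁻¹ * X ^ n)) :=
          _root_.map_sum L0 _ _
      _ = ∑ n ∈ Finset.range m, ((n.factorial : ℂ))⁻¹ • (T ^ n *ᵥ y) := by
          refine Finset.sum_congr rfl fun n _ => ?_
          show aeval T (C ((n.factorial : ℂ))⁻¹ * X ^ n) *ᵥ y = _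
          rw [_root_.map_mul, aeval_C, _root_.map_pow, aeval_X,
            Algebra.algebraMap_eq_smul_one, smul_mul_assoc, one_mul,
            Matrix.smul_mulVec]
  rw [h2, h3, h4]

lemma expSub_pow_mulVec {T : Matrix (Fin r) (Fin r) ℂ} {m : ℕ} (k : ℕ) {y : Fin r → ℂ}
    (hy : T ^ m *ᵥ y = 0) :
    (NormedSpace.exp T - 1) ^ k *ᵥ y = (aeval T (Epoly m - 1)) ^ k *ᵥ y := by
  induction k generalizing y with
  | zero => simp
  | succ k ih =>
    set B := aeval T (Epoly m - 1) with hB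
    have hstep : ∀ z : Fin r → ℂ, T ^ m *ᵥ z = 0 →
        (NormedSpace.exp T - 1) *ᵥ z = B *ᵥ z := by
      intro z hz
      rw [Matrix.sub_mulVec, Matrix.one_mulVec, exp_mulVec hz, hB, _root_.map_sub,
        _root_.map_one, Matrix.sub_mulVec, Matrix.one_mulVec]
    have hTBz : T ^ m *ᵥ (B *ᵥ y) = 0 := by
      have hcom : T ^ m * B = B * T ^ m :=
        ((commute_aeval (Commute.refl T) (Epoly m - 1)).pow_left m)
      rw [Matrix.mulVec_mulVec, hcom, ← Matrix.mulVec_mulVec, hy, Matrix.mulVec_zero]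
    rw [pow_succ, ← Matrix.mulVec_mulVec, hstep y hy, ih hTBz, Matrix.mulVec_mulVec,
      ← pow_succ]

lemma aeval_exp_transport {T : Matrix (Fin r) (Fin r) ℂ} {m : ℕ} {y : Fin r → ℂ}
    (hy : T ^ m *ᵥ y = 0) (q : ℂ[X]) :
    aeval (NormedSpace.exp T - 1) q *ᵥ y = aeval (aeval T (Epoly m - 1)) q *ᵥ y := by
  induction q using Polynomial.induction_on' with
  | add p q hp hq =>
    rw [_root_.map_add, _root_.map_add, Matrix.add_mulVec, Matrix.add_mulVec, hp, hq]
  | monomial n a =>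
    rw [aeval_monomial, aeval_monomial]
    simp only [Algebra.algebraMap_eq_smul_one, smul_mul_assoc, one_mul]
    rw [Matrix.smul_mulVec, Matrix.smul_mulVec, expSub_pow_mulVec n hy]

lemma log_extract {T : Matrix (Fin r) (Fin r) ℂ} {m : ℕ} {y : Fin r → ℂ}
    (hy : T ^ m *ᵥ y = 0) :
    aeval (NormedSpace.exp T - 1) (Lpoly (m + 1)) *ᵥ y = T *ᵥ y := by
  have hy' : T ^ (m + 1) *ᵥ y = 0 := by
    rw [pow_succ', ← Matrix.mulVec_mulVec, hy, Matrix.mulVec_zero]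
  rw [aeval_exp_transport hy' (Lpoly (m + 1)), ← aeval_comp]
  obtain ⟨s, hs⟩ := key_dvd m
  have hcompeq : (Lpoly (m + 1)).comp (Epoly (m + 1) - 1) = X + X ^ (m + 1) * s := by
    linear_combination hs
  rw [hcompeq, _root_.map_add, aeval_X, _root_.map_mul, _root_.map_pow, aeval_X,
    Matrix.add_mulVec]
  have hcom : T ^ (m + 1) * aeval T s = aeval T s * T ^ (m + 1) :=
    ((commute_aeval (Commute.refl T) s).pow_left (m + 1))
  rw [hcom, ← Matrix.mulVec_mulVec, hy', Matrix.mulVec_zero, add_zero]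

lemma key_comm (A G K : Matrix (Fin r) (Fin r) ℂ)
    (hG : NormedSpace.exp (((2 * ↑Real.pi * Complex.I) : ℂ) • K) = G)
    (hspec : ∀ μ ∈ spectrum ℂ K, μ.re ∈ Set.Ico (0 : ℝ) 1)
    (hA : A * G = G * A) : A * K = K * A := by
  classical
  set c : ℂ := 2 * Real.pi * Complex.I with hc_def
  have hc : c ≠ 0 :=
    mul_ne_zero (mul_ne_zero two_ne_zero (by exact_mod_cast Real.pi_ne_zero)) Complex.I_ne_zero
  -- injectivity of μ ↦ exp (c μ) on the strip
  have hinj : ∀ μ₁ μ₂ : ℂ, μ₁.re ∈ Set.Ico (0:ℝ) 1 → μ₂.re ∈ Set.Ico (0:ℝ) 1 →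
      Complex.exp (c * μ₁) = Complex.exp (c * μ₂) → μ₁ = μ₂ := by
    intro μ₁ μ₂ h1 h2 he
    rw [Complex.exp_eq_exp_iff_exists_int] at he
    obtain ⟨n, hn⟩ := he
    have hn' : c * μ₁ = c * (μ₂ + n) := by
      rw [hn, hc_def]; ring
    have hμ : μ₁ = μ₂ + n := mul_left_cancel₀ hc hn'
    have hre : μ₁.re = μ₂.re + (n : ℝ) := by
      rw [hμ]; simp
    obtain ⟨h1a, h1b⟩ := h1; obtain ⟨h2a, h2b⟩ := h2
    have h3 : ((n : ℝ)) < 1 := by rw [hre] at h1b; linarith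
    have h4 : (-1 : ℝ) < (n : ℝ) := by rw [hre] at h1a; linarith
    have h5 : n = 0 := by
      have h3' : n < 1 := by exact_mod_cast h3
      have h4' : -1 < n := by exact_mod_cast h4
      omega
    rw [hμ, h5]; simp
  -- the exponential decomposition of G at each μ
  have hGdec : ∀ μ : ℂ, G = Complex.exp (c * μ) • NormedSpace.exp (c • (K - μ • 1)) := by
    intro μ
    have h1 : c • K = (c * μ) • (1 : Matrix (Fin r) (Fin r) ℂ) + c • (K - μ • 1) := by
      rw [smul_sub, smul_smul]; abel
    have hcomm1 : Commute ((c * μ) • (1 : Matrix (Fin r) (Fin r) ℂ)) (c • (K - μ • 1)) :=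
      ((Commute.one_left _).smul_left _).smul_right _
    rw [← hG, h1, Matrix.exp_add_of_commute _ _ hcomm1]
    have h2 : NormedSpace.exp ((c * μ) • (1 : Matrix (Fin r) (Fin r) ℂ))
        = Complex.exp (c * μ) • (1 : Matrix (Fin r) (Fin r) ℂ) := by
      rw [show ((c * μ) • (1 : Matrix (Fin r) (Fin r) ℂ))
          = algebraMap ℂ (Matrix (Fin r) (Fin r) ℂ) (c * μ)
          from (Algebra.algebraMap_eq_smul_one _).symm]
      erw [← NormedSpace.algebraMap_exp_comm, ← Complex.exp_eq_exp_ℂ,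
        Algebra.algebraMap_eq_smul_one]
    rw [h2, smul_mul_assoc, one_mul]
  -- inclusion of generalized eigenspaces
  have hincl : ∀ (μ' : ℂ) (k : ℕ) (v : Fin r → ℂ), (K - μ' • 1) ^ k *ᵥ v = 0 →
      (G - Complex.exp (c * μ') • 1) ^ k *ᵥ v = 0 := by
    intro μ' k v hv
    match k with
    | 0 => simpa using hv
    | (k+1) =>
      have hT : (c • (K - μ' • 1)) ^ (k+1) *ᵥ v = 0 := by
        rw [_root_.smul_pow, Matrix.smul_mulVec, hv, smul_zero]
      have h2 : G - Complex.exp (c * μ') • 1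
          = Complex.exp (c * μ') • (NormedSpace.exp (c • (K - μ' • 1)) - 1) := by
        rw [hGdec μ']
        exact (smul_sub _ _ _).symm
      rw [h2, _root_.smul_pow, Matrix.smul_mulVec, expSub_pow_mulVec (k+1) hT, ← _root_.map_pow]
      obtain ⟨s, hs⟩ : (X : ℂ[X]) ^ (k+1) ∣ (Epoly (k+1) - 1) ^ (k+1) := by
        refine pow_dvd_pow_of_dvd ?_ _
        rw [Polynomial.X_dvd_iff, Polynomial.coeff_sub, coeff_zero_eq_eval_zero,
          eval_zero_Epoly]
        simp
      rw [hs, _root_.map_mul, _root_.map_pow, aeval_X]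
      have hcom : (c • (K - μ' • 1)) ^ (k+1) * aeval (c • (K - μ' • 1)) s
          = aeval (c • (K - μ' • 1)) s * (c • (K - μ' • 1)) ^ (k+1) :=
        (commute_aeval (Commute.refl _) s).pow_left (k+1)
      rw [hcom, ← Matrix.mulVec_mulVec, hT, Matrix.mulVec_zero, smul_zero]
  -- setup endomorphism picture
  set Φ : Matrix (Fin r) (Fin r) ℂ ≃ₐ[ℂ] ((Fin r → ℂ) →ₗ[ℂ] (Fin r → ℂ)) :=
    Matrix.toLinAlgEquiv' with hΦdef
  have hΦ : ∀ (M : Matrix (Fin r) (Fin r) ℂ) (v : Fin r → ℂ), Φ M v = M *ᵥ v :=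
    fun M v => rfl
  have hmemM : ∀ (Mt : Matrix (Fin r) (Fin r) ℂ) (μ : ℂ) (v : Fin r → ℂ),
      v ∈ Module.End.maxGenEigenspace (Φ Mt) μ ↔ ∃ k : ℕ, (Mt - μ • 1) ^ k *ᵥ v = 0 := by
    intro Mt μ v
    rw [Module.End.mem_maxGenEigenspace]
    refine exists_congr fun k => ?_
    have h1 : (Φ Mt - μ • 1) ^ k = Φ ((Mt - μ • 1) ^ k) := by
      rw [_root_.map_pow, _root_.map_sub, _root_.map_smul, _root_.map_one]
    rw [h1, hΦ]
  have hspec_of : ∀ (μ' : ℂ) (u : Fin r → ℂ), u ≠ 0 →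
      u ∈ Module.End.maxGenEigenspace (Φ K) μ' → μ' ∈ spectrum ℂ K := by
    intro μ' u hu0 hu
    rw [← AlgEquiv.spectrum_eq Φ K]
    obtain ⟨k, hk⟩ := Module.End.mem_maxGenEigenspace _ _ _ |>.mp hu
    have hne : Module.End.genEigenspace (Φ K) μ' (k : ℕ∞) ≠ ⊥ := by
      intro hbot
      have hmem : u ∈ Module.End.genEigenspace (Φ K) μ' (k : ℕ) := by
        rw [Module.End.genEigenspace_nat, LinearMap.mem_ker]
        exact hk
      rw [hbot] at hmem
      exact hu0 ((Submodule.mem_bot ℂ).mp hmem)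
    exact (Module.End.hasEigenvalue_of_hasGenEigenvalue
      (Module.End.hasGenEigenvalue_iff.mpr hne)).mem_spectrum
  -- K-eigenspaces included in G-eigenspaces
  have hKG : ∀ μ' : ℂ, Module.End.maxGenEigenspace (Φ K) μ'
      ≤ Module.End.maxGenEigenspace (Φ G) (Complex.exp (c * μ')) := by
    intro μ' u hu
    rw [hmemM] at hu ⊢
    obtain ⟨k, hk⟩ := hu
    exact ⟨k, hincl μ' k u hk⟩
  -- main pointwise commutation on each generalized eigenspace
  have main : ∀ (μ : ℂ) (y : Fin r → ℂ), y ∈ Module.End.maxGenEigenspace (Φ K) μ →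
      A *ᵥ (K *ᵥ y) = K *ᵥ (A *ᵥ y) := by
    intro μ y hy
    by_cases hy0 : y = 0
    · simp [hy0]
    have hμspec : μ ∈ spectrum ℂ K := hspec_of μ y hy0 hy
    -- G-eigenspace equals K-eigenspace (reverse inclusion)
    have hWle : Module.End.maxGenEigenspace (Φ G) (Complex.exp (c * μ)) ≤ Module.End.maxGenEigenspace (Φ K) μ := by
      intro v hv
      have hvtop : v ∈ ⨆ μ', Module.End.maxGenEigenspace (Φ K) μ' := by
        rw [Module.End.iSup_maxGenEigenspace_eq_top (Φ K)]; trivial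
      rw [Submodule.mem_iSup_iff_exists_finsupp] at hvtop
      obtain ⟨w, hwmem, hwsum⟩ := hvtop
      have hsum' : ∑ μ' ∈ w.support, w μ' = v := hwsum
      have hrestmem : ∀ μ' ∈ w.support.erase μ,
          w μ' ∈ ⨆ (lam : ℂ) (_ : lam ≠ Complex.exp (c * μ)), Module.End.maxGenEigenspace (Φ G) lam := by
        intro μ' hμ'
        have hne : μ' ≠ μ := Finset.ne_of_mem_erase hμ'
        have hμ'mem : μ' ∈ w.support := Finset.mem_of_mem_erase hμ'
        have hw0 : w μ' ≠ 0 := Finsupp.mem_support_iff.mp hμ'mem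
        have hμ'spec : μ' ∈ spectrum ℂ K := hspec_of μ' (w μ') hw0 (hwmem μ')
        have hlamne : Complex.exp (c * μ') ≠ Complex.exp (c * μ) := by
          intro h
          exact hne (hinj μ' μ (hspec _ hμ'spec) (hspec _ hμspec) h)
        exact Submodule.mem_iSup_of_mem (Complex.exp (c * μ'))
          (Submodule.mem_iSup_of_mem hlamne (hKG μ' (hwmem μ')))
      have hrest : v - w μ ∈ ⨆ (lam : ℂ) (_ : lam ≠ Complex.exp (c * μ)),
          Module.End.maxGenEigenspace (Φ G) lam := by
        by_cases hμs : μ ∈ w.support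
        · have heq : ∑ μ' ∈ w.support.erase μ, w μ' = v - w μ := by
            have := Finset.add_sum_erase w.support (fun μ' => w μ') hμs
            rw [← hsum']
            linear_combination this
          rw [← heq]
          exact Submodule.sum_mem _ hrestmem
        · have hwμ : w μ = 0 := Finsupp.notMem_support_iff.mp hμs
          have herase : w.support.erase μ = w.support := Finset.erase_eq_of_notMem hμs
          rw [hwμ, sub_zero, ← hsum']
          rw [← herase]
          exact Submodule.sum_mem _ hrestmem
      have hvW : v - w μ ∈ Module.End.maxGenEigenspace (Φ G) (Complex.exp (c * μ)) :=
        sub_mem hv (hKG μ (hwmem μ))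
      have hdisj := Module.End.independent_maxGenEigenspace (Φ G) (Complex.exp (c * μ))
      have hzero : v - w μ = 0 :=
        (Submodule.disjoint_def.mp hdisj) _ hvW hrest
      have hveq : v = w μ := by rwa [sub_eq_zero] at hzero
      rw [hveq]
      exact hwmem μ
    -- A preserves the eigenspace
    have hAy : A *ᵥ y ∈ Module.End.maxGenEigenspace (Φ K) μ := by
      apply hWle
      have hyW : y ∈ Module.End.maxGenEigenspace (Φ G) (Complex.exp (c * μ)) := hKG μ hy
      have hcommΦ : Commute (Φ G) (Φ A) := by
        show Φ G * Φ A = Φ A * Φ G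
        rw [← _root_.map_mul, ← _root_.map_mul, hA]
      have hmt := Module.End.mapsTo_maxGenEigenspace_of_comm hcommΦ (Complex.exp (c * μ)) hyW
      rw [hΦ] at hmt
      exact hmt
    -- now extract the commutation with N on the eigenspace
    obtain ⟨k₁, hk₁⟩ := (hmemM K μ y).mp hy
    obtain ⟨k₂, hk₂⟩ := (hmemM K μ _).mp hAy
    set N : Matrix (Fin r) (Fin r) ℂ := K - μ • 1 with hN
    set T : Matrix (Fin r) (Fin r) ℂ := c • N with hT
    set m : ℕ := max k₁ k₂ with hm
    have hpow : ∀ (k : ℕ) (v : Fin r → ℂ), k ≤ m → N ^ k *ᵥ v = 0 → T ^ m *ᵥ v = 0 := by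
      intro k v hk hv
      rw [hT, _root_.smul_pow, Matrix.smul_mulVec]
      have hNm : N ^ m *ᵥ v = 0 := by
        rw [show m = (m - k) + k by omega, pow_add, ← Matrix.mulVec_mulVec, hv,
          Matrix.mulVec_zero]
      rw [hNm, smul_zero]
    have hTy : T ^ m *ᵥ y = 0 := hpow k₁ y (le_max_left _ _) hk₁
    have hTz : T ^ m *ᵥ (A *ᵥ y) = 0 := hpow k₂ _ (le_max_right _ _) hk₂
    have hAexp : Commute A (NormedSpace.exp T - 1) := by
      have h1 : A * NormedSpace.exp T = NormedSpace.exp T * A := by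
        have h2 := hA
        rw [hGdec μ, mul_smul_comm, smul_mul_assoc] at h2
        exact smul_right_injective _ (Complex.exp_ne_zero (c * μ)) h2
      exact (Commute.sub_right h1 (Commute.one_right A))
    have hAq : Commute A (aeval (NormedSpace.exp T - 1) (Lpoly (m + 1))) :=
      commute_aeval hAexp _
    have hmain : A *ᵥ (T *ᵥ y) = T *ᵥ (A *ᵥ y) := by
      rw [← log_extract hTy, Matrix.mulVec_mulVec, hAq.eq, ← Matrix.mulVec_mulVec]
      exact log_extract hTz
    have hNcomm : A *ᵥ (N *ᵥ y) = N *ᵥ (A *ᵥ y) := by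
      have h3 := hmain
      rw [hT, Matrix.smul_mulVec, Matrix.smul_mulVec, Matrix.mulVec_smul] at h3
      exact smul_right_injective _ hc h3
    have hKN : K = N + μ • 1 := by rw [hN]; abel
    rw [hKN, Matrix.add_mulVec, Matrix.add_mulVec, Matrix.smul_mulVec,
      Matrix.smul_mulVec, Matrix.one_mulVec, Matrix.mulVec_add, Matrix.mulVec_smul,
      hNcomm]
    simp [Matrix.one_mulVec]
  -- conclude the matrix identity
  have hvec : ∀ v : Fin r → ℂ, (A * K) *ᵥ v = (K * A) *ᵥ v := by
    intro v
    have hvtop : v ∈ ⨆ μ, Module.End.maxGenEigenspace (Φ K) μ := by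
      rw [Module.End.iSup_maxGenEigenspace_eq_top (Φ K)]; trivial
    refine Submodule.iSup_induction' (motive := fun x _ => (A * K) *ᵥ x = (K * A) *ᵥ x)
      _ ?_ ?_ ?_ hvtop
    · intro μ x hx
      rw [← Matrix.mulVec_mulVec, ← Matrix.mulVec_mulVec]
      exact main μ x hx
    · simp
    · intro x y hx hy h1 h2
      rw [Matrix.mulVec_add, Matrix.mulVec_add, h1, h2]
  apply Φ.injective
  apply LinearMap.ext
  intro v
  rw [hΦ, hΦ]
  exact hvec v

/-- The normalised logarithms of commuting invertible matrices commute. -/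
theorem normLog_commute {r : ℕ}
    (G G' K K' : Matrix (Fin r) (Fin r) ℂ)
    (hG : IsUnit G.det) (hG' : IsUnit G'.det)
    (hK : NormedSpace.exp (((2 * ↑Real.pi * Complex.I) : ℂ) • K) = G)
    (hK' : NormedSpace.exp (((2 * ↑Real.pi * Complex.I) : ℂ) • K') = G')
    (hKspec : ∀ μ ∈ spectrum ℂ K, μ.re ∈ Set.Ico (0 : ℝ) 1)
    (hK'spec : ∀ μ ∈ spectrum ℂ K', μ.re ∈ Set.Ico (0 : ℝ) 1)
    (hcomm : G * G' = G' * G) :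
    K * K' = K' * K := by
  have h1 : G' * K = K * G' := key_comm G' G K hK hKspec hcomm.symm
  exact key_comm K G' K' hK' hK'spec h1.symm
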